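/- For fractional Brownian motion with H < 1/2, there is a constant C > 0 such that for all t ∈ [0,T], all n ≥ 2, and all integers j ≥ 1, |E[ΔB_{j/n} B_t]| ≤ C n^{-2H} (j^{2H-1} + |j - nt|^{2H-1}), where the second term is interpreted as bounded when |j - nt| ≤ 1. -/

import Mathlib

open MeasureTheory

set_option maxHeartbeats 1000000

/- Subadditivity of `x ↦ x ^ p` for `0 ≤ p ≤ 1`. -/
private lemma aux_subadd {p x y : ℝ} (hp0 : 0 ≤ p) (hp1 : p ≤ 1) (hy : 0 ≤ y)
    (hxy : y ≤ x) : x ^ p - y ^ p ≤ (x - y) ^ p := by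
  have hd : 0 ≤ x - y := by linarith
  have h := NNReal.rpow_add_le_add_rpow (x - y).toNNReal y.toNNReal hp0 hp1
  have h' : (x - y).toNNReal + y.toNNReal = x.toNNReal := by
    ext
    simp [Real.coe_toNNReal _ hd, Real.coe_toNNReal _ hy,
      Real.coe_toNNReal _ (hy.trans hxy)]
  rw [h'] at h
  have hcast := (NNReal.coe_le_coe).2 h
  rw [NNReal.coe_rpow, NNReal.coe_add, NNReal.coe_rpow, NNReal.coe_rpow,
    Real.coe_toNNReal _ (hy.trans hxy), Real.coe_toNNReal _ hd,
    Real.coe_toNNReal _ hy] at hcast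
  linarith

/- Concavity bound: `x ^ p - y ^ p ≤ p * y ^ (p-1) * (x - y)` for `0 < p ≤ 1`. -/
private lemma aux_concave {p x y : ℝ} (hp0 : 0 < p) (hp1 : p ≤ 1) (hy : 0 < y)
    (hxy : y ≤ x) : x ^ p - y ^ p ≤ p * y ^ (p - 1) * (x - y) := by
  have hs0 : 0 ≤ (x - y) / y := div_nonneg (by linarith) hy.le
  have hs : (-1 : ℝ) ≤ (x - y) / y := by linarith
  have h := rpow_one_add_le_one_add_mul_self hs hp0.le hp1
  have hx : x = y * (1 + (x - y) / y) := by field_simp; ring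
  have hxp : x ^ p = y ^ p * (1 + (x - y) / y) ^ p := by
    conv_lhs => rw [hx]
    rw [Real.mul_rpow hy.le (by linarith)]
  have hyp : 0 ≤ y ^ p := Real.rpow_nonneg hy.le p
  have hkey : x ^ p ≤ y ^ p * (1 + p * ((x - y) / y)) := by
    rw [hxp]; exact mul_le_mul_of_nonneg_left h hyp
  have hy1 : y ^ p * ((x - y) / y) = y ^ (p - 1) * (x - y) := by
    rw [Real.rpow_sub hy]
    field_simp
    rw [Real.rpow_one]; ring
  calc x ^ p - y ^ p ≤ y ^ p * (1 + p * ((x - y) / y)) - y ^ p := by linarith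
    _ = p * (y ^ p * ((x - y) / y)) := by ring
    _ = p * y ^ (p - 1) * (x - y) := by rw [hy1]; ring

/- Mean value bound for `| |u|^p - |v|^p |` when both are bounded below by `m`. -/
private lemma aux_abs_rpow {p m : ℝ} (hp0 : 0 < p) (hp1 : p ≤ 1) (hm : 0 < m)
    {u v : ℝ} (hu : m ≤ |u|) (hv : m ≤ |v|) :
    |(|u|) ^ p - (|v|) ^ p| ≤ p * m ^ (p - 1) * |u - v| := by
  have key : ∀ a b : ℝ, m ≤ |a| → m ≤ |b| → |b| ≤ |a| →
      (|a|) ^ p - (|b|) ^ p ≤ p * m ^ (p - 1) * |a - b| := by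
    intro a b ha hb hba
    have h1 := aux_concave hp0 hp1 (hm.trans_le hb) hba
    have h2 : (|b|) ^ (p - 1) ≤ m ^ (p - 1) :=
      Real.rpow_le_rpow_of_nonpos hm hb (by linarith)
    have h3 : |a| - |b| ≤ |a - b| := abs_sub_abs_le_abs_sub a b
    have h4 : 0 ≤ |a| - |b| := by linarith
    calc (|a|) ^ p - (|b|) ^ p ≤ p * (|b|) ^ (p - 1) * (|a| - |b|) := h1
      _ ≤ p * m ^ (p - 1) * |a - b| := by
          apply mul_le_mul (mul_le_mul_of_nonneg_left h2 hp0.le) h3 h4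
          positivity
  rcases le_total |v| |u| with hle | hle
  · rw [abs_of_nonneg (by
      have := Real.rpow_le_rpow (abs_nonneg v) hle hp0.le; linarith)]
    exact key u v hu hv hle
  · rw [abs_of_nonpos (by
      have := Real.rpow_le_rpow (abs_nonneg u) hle hp0.le; linarith), neg_sub]
    rw [abs_sub_comm u v]
    exact key v u hv hu hle

/-- For fBm with `H < 1/2`, there is a constant `C > 0` such that for all
`t ∈ [0,T]`, `n ≥ 2` and `j ≥ 1`,
`|E[ΔB_{j/n} B_t]| ≤ C n^{-2H} (j^{2H-1} + |j - nt|^{2H-1})`, where the second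
term is interpreted as bounded (i.e. `|j - nt|` is replaced by `max |j - nt| 1`)
when `|j - nt| ≤ 1`. -/
theorem fbm_increment_process_covariance_decay
    {Ω : Type*} [MeasurableSpace Ω] (μ : Measure Ω) [IsProbabilityMeasure μ]
    (H : ℝ) (hH0 : 0 < H) (hH1 : H < 1/2) (T : ℝ) (hT : 0 < T)
    (B : ℝ → Ω → ℝ)
    (hint : ∀ s t : ℝ, Integrable (fun ω => B s ω * B t ω) μ)
    (hcov : ∀ s t : ℝ, 0 ≤ s → 0 ≤ t →
      ∫ ω, B s ω * B t ω ∂μ = (s ^ (2*H) + t ^ (2*H) - |t - s| ^ (2*H)) / 2) :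
    ∃ C : ℝ, 0 < C ∧ ∀ t ∈ Set.Icc (0:ℝ) T, ∀ (n j : ℕ), 2 ≤ n → 1 ≤ j →
      |∫ ω, (B (((j:ℝ)+1)/n) ω - B ((j:ℝ)/n) ω) * B t ω ∂μ|
        ≤ C * (n : ℝ) ^ (-(2*H))
          * ((j:ℝ) ^ (2*H - 1) + (max |(j:ℝ) - n*t| 1) ^ (2*H - 1)) := by
  refine ⟨2, by norm_num, ?_⟩
  intro t ht n j hn hj
  have ht0 : (0:ℝ) ≤ t := ht.1
  have hn0 : (0:ℝ) < n := by exact_mod_cast Nat.lt_of_lt_of_le (by norm_num) hn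
  have hj0 : (0:ℝ) < j := by exact_mod_cast Nat.lt_of_lt_of_le (by norm_num) hj
  have hp0 : (0:ℝ) < 2 * H := by linarith
  have hp1 : 2 * H ≤ 1 := by linarith
  set p := 2 * H with hp
  set s0 : ℝ := (j:ℝ) / n with hs0def
  set s1 : ℝ := ((j:ℝ) + 1) / n with hs1def
  have hs00 : 0 ≤ s0 := div_nonneg hj0.le hn0.le
  have hs10 : 0 ≤ s1 := div_nonneg (by linarith) hn0.le
  -- split the integral
  have hsplit : ∫ ω, (B s1 ω - B s0 ω) * B t ω ∂μ
      = (∫ ω, B s1 ω * B t ω ∂μ) - ∫ ω, B s0 ω * B t ω ∂μ := by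
    rw [← integral_sub (hint s1 t) (hint s0 t)]
    congr 1; ext ω; ring
  rw [hsplit, hcov s1 t hs10 ht0, hcov s0 t hs00 ht0]
  have hE : (s1 ^ p + t ^ p - |t - s1| ^ p) / 2 - (s0 ^ p + t ^ p - |t - s0| ^ p) / 2
      = ((s1 ^ p - s0 ^ p) - ((|t - s1|) ^ p - (|t - s0|) ^ p)) / 2 := by ring
  rw [hE]
  -- notation
  set M : ℝ := max |(j:ℝ) - n*t| 1 with hMdef
  have hM1 : (1:ℝ) ≤ M := le_max_right _ _
  have hM0 : (0:ℝ) < M := by linarith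
  have hnp : (0:ℝ) < (n:ℝ) ^ p := Real.rpow_pos_of_pos hn0 p
  have hnneg : (n:ℝ) ^ (-p) = ((n:ℝ) ^ p)⁻¹ := Real.rpow_neg hn0.le p
  have hnnegpos : (0:ℝ) < (n:ℝ) ^ (-p) := Real.rpow_pos_of_pos hn0 (-p)
  -- key distance facts
  have hd0 : |t - s0| = |(j:ℝ) - n*t| / n := by
    rw [hs0def]
    rw [show t - (j:ℝ)/n = -(((j:ℝ) - n*t)/n) by field_simp; ring]
    rw [abs_neg, abs_div, abs_of_pos hn0]
  have hdiff : |(t - s1) - (t - s0)| = 1 / n := by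
    rw [show (t - s1) - (t - s0) = -(1/n) by rw [hs0def, hs1def]; field_simp; ring]
    rw [abs_neg, abs_of_pos (by positivity)]
  -- Term A : s1^p - s0^p
  have hs1p : s1 ^ p = ((j:ℝ) + 1) ^ p / (n:ℝ) ^ p := by
    rw [hs1def, Real.div_rpow (by linarith) hn0.le]
  have hs0p : s0 ^ p = (j:ℝ) ^ p / (n:ℝ) ^ p := by
    rw [hs0def, Real.div_rpow hj0.le hn0.le]
  have hA0 : 0 ≤ s1 ^ p - s0 ^ p := by
    have hle : (j:ℝ) ^ p ≤ ((j:ℝ) + 1) ^ p :=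
      Real.rpow_le_rpow hj0.le (by linarith) hp0.le
    rw [hs1p, hs0p]
    have : (j:ℝ) ^ p / (n:ℝ) ^ p ≤ ((j:ℝ) + 1) ^ p / (n:ℝ) ^ p := by gcongr
    linarith
  have hA : s1 ^ p - s0 ^ p ≤ (j:ℝ) ^ (p - 1) * (n:ℝ) ^ (-p) := by
    have hcon := aux_concave hp0 hp1 hj0 (by linarith : (j:ℝ) ≤ (j:ℝ) + 1)
    have hcon' : ((j:ℝ) + 1) ^ p - (j:ℝ) ^ p ≤ (j:ℝ) ^ (p - 1) := by
      have hjp : (0:ℝ) ≤ (j:ℝ) ^ (p - 1) := Real.rpow_nonneg hj0.le _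
      calc ((j:ℝ) + 1) ^ p - (j:ℝ) ^ p ≤ p * (j:ℝ) ^ (p - 1) * ((j:ℝ)+1-(j:ℝ)) := hcon
        _ = p * (j:ℝ) ^ (p - 1) := by ring
        _ ≤ 1 * (j:ℝ) ^ (p - 1) := mul_le_mul_of_nonneg_right hp1 hjp
        _ = (j:ℝ) ^ (p - 1) := by ring
    rw [hs1p, hs0p, div_sub_div_same, hnneg, div_eq_mul_inv]
    exact mul_le_mul_of_nonneg_right hcon' (by positivity)
  -- Term D
  have hD : |(|t - s1|) ^ p - (|t - s0|) ^ p| ≤ 2 * M ^ (p - 1) * (n:ℝ) ^ (-p) := by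
    rcases le_or_gt |(j:ℝ) - n*t| 2 with hu | hu
    · -- small case : subadditivity bound
      have hstep : |(|t - s1|) ^ p - (|t - s0|) ^ p| ≤ (n:ℝ) ^ (-p) := by
        have h3 : ((1:ℝ)/n) ^ p = (n:ℝ) ^ (-p) := by
          rw [Real.div_rpow zero_le_one hn0.le, Real.one_rpow, hnneg, one_div]
        have hb : ∀ a b : ℝ, |b| ≤ |a| → |a| - |b| ≤ 1/n →
            (|a|) ^ p - (|b|) ^ p ≤ (n:ℝ) ^ (-p) := by
          intro a b hba hab
          have h1 := aux_subadd hp0.le hp1 (abs_nonneg b) hba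
          have h2 : (|a| - |b|) ^ p ≤ (1/n) ^ p :=
            Real.rpow_le_rpow (by linarith) hab hp0.le
          rw [h3] at h2
          linarith
        have habs : ∀ a b : ℝ, |t - a| - |t - b| ≤ 1/n → True := fun _ _ _ => trivial
        have hd01 : |(|t - s1|) - (|t - s0|)| ≤ 1/n := by
          calc |(|t - s1|) - (|t - s0|)| ≤ |(t - s1) - (t - s0)| :=
                abs_abs_sub_abs_le_abs_sub _ _
            _ = 1/n := hdiff
        rw [abs_le] at hd01
        rcases le_total |t - s0| |t - s1| with hle | hle
        · rw [abs_of_nonneg (by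
            have := Real.rpow_le_rpow (abs_nonneg (t - s0)) hle hp0.le; linarith)]
          exact hb _ _ hle (by linarith [hd01.2])
        · rw [abs_of_nonpos (by
            have := Real.rpow_le_rpow (abs_nonneg (t - s1)) hle hp0.le; linarith),
            neg_sub]
          exact hb _ _ hle (by linarith [hd01.1])
      have hM2 : M ≤ 2 := max_le hu (by norm_num)
      have hMp : (2:ℝ)⁻¹ ≤ M ^ (p - 1) := by
        have h1 : (2:ℝ) ^ (p - 1) ≤ M ^ (p - 1) :=
          Real.rpow_le_rpow_of_nonpos hM0 hM2 (by linarith)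
        have h2 : (2:ℝ) ^ (-1 : ℝ) ≤ (2:ℝ) ^ (p - 1) :=
          Real.rpow_le_rpow_of_exponent_le one_le_two (by linarith)
        rw [Real.rpow_neg_one] at h2
        linarith
      calc |(|t - s1|) ^ p - (|t - s0|) ^ p| ≤ (n:ℝ) ^ (-p) := hstep
        _ = 2 * 2⁻¹ * (n:ℝ) ^ (-p) := by norm_num
        _ ≤ 2 * M ^ (p - 1) * (n:ℝ) ^ (-p) := by
            apply mul_le_mul_of_nonneg_right _ hnnegpos.le
            exact mul_le_mul_of_nonneg_left hMp (by norm_num)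
    · -- large case : mean value bound
      set u : ℝ := |(j:ℝ) - n*t| with hudef
      have hu0 : (0:ℝ) < u := by linarith
      have hMu : M = u := max_eq_left (by rw [hMdef] at *; linarith)
      set m : ℝ := (u - 1) / n with hmdef
      have hm0 : (0:ℝ) < m := div_pos (by linarith) hn0
      have hmv : m ≤ |t - s0| := by
        rw [hd0, hmdef]
        gcongr
        linarith
      have hmu : m ≤ |t - s1| := by
        have habs2 : |t - s0| - |t - s1| ≤ 1/n := by
          have h := abs_sub_abs_le_abs_sub (t - s0) (t - s1)
          have h2 : |(t - s0) - (t - s1)| = 1/n := by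
            rw [abs_sub_comm]; exact hdiff
          linarith
        have hm_eq : m = |t - s0| - 1/n := by
          rw [hd0, hmdef, sub_div]
        linarith
      have hmain := aux_abs_rpow hp0 hp1 hm0 hmu hmv
      rw [hdiff] at hmain
      have hm_lb : u / (2*n) ≤ m := by
        rw [hmdef, show u / (2*(n:ℝ)) = (u/2)/n by ring]
        gcongr
        linarith
      have h2n : (0:ℝ) < u/(2*n) := by positivity
      have hmle : m ^ (p-1) ≤ (u/(2*n)) ^ (p-1) :=
        Real.rpow_le_rpow_of_nonpos h2n hm_lb (by linarith)
      have hsplit2 : (u/(2*n)) ^ (p-1)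
          = u^(p-1) * ((2:ℝ)^(p-1))⁻¹ * (((n:ℝ)^(p-1))⁻¹) := by
        rw [Real.div_rpow hu0.le (by positivity), Real.mul_rpow (by norm_num) hn0.le,
          div_eq_mul_inv, mul_inv]
        ring
      have h2p : ((2:ℝ)^(p-1))⁻¹ ≤ 2 := by
        have he : ((2:ℝ)^(p-1))⁻¹ = (2:ℝ)^(1-p) := by
          rw [← Real.rpow_neg (by norm_num : (0:ℝ) ≤ 2)]
          ring_nf
        rw [he]
        calc (2:ℝ)^(1-p) ≤ (2:ℝ)^(1:ℝ) :=
              Real.rpow_le_rpow_of_exponent_le one_le_two (by linarith)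
          _ = 2 := Real.rpow_one 2
      have hfin : ((n:ℝ)^(p-1))⁻¹ * (1/n) = (n:ℝ)^(-p) := by
        rw [← Real.rpow_neg hn0.le, one_div, ← Real.rpow_neg_one (n:ℝ),
          ← Real.rpow_add hn0]
        ring_nf
      have hup : (0:ℝ) ≤ u ^ (p-1) := Real.rpow_nonneg hu0.le _
      calc |(|t - s1|) ^ p - (|t - s0|) ^ p| ≤ p * m ^ (p-1) * (1/n) := hmain
        _ ≤ 1 * m ^ (p-1) * (1/n) := by
            apply mul_le_mul_of_nonneg_right _ (by positivity)
            exact mul_le_mul_of_nonneg_right hp1 (Real.rpow_nonneg hm0.le _)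
        _ = m ^ (p-1) * (1/n) := by ring
        _ ≤ (u/(2*n)) ^ (p-1) * (1/n) :=
            mul_le_mul_of_nonneg_right hmle (by positivity)
        _ = u^(p-1) * ((2:ℝ)^(p-1))⁻¹ * (((n:ℝ)^(p-1))⁻¹ * (1/n)) := by
            rw [hsplit2]; ring
        _ = u^(p-1) * ((2:ℝ)^(p-1))⁻¹ * (n:ℝ)^(-p) := by rw [hfin]
        _ ≤ u^(p-1) * 2 * (n:ℝ)^(-p) := by
            apply mul_le_mul_of_nonneg_right _ hnnegpos.le
            exact mul_le_mul_of_nonneg_left h2p hup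
        _ = 2 * M ^ (p-1) * (n:ℝ)^(-p) := by rw [hMu]; ring
  -- assemble
  have habs : |((s1 ^ p - s0 ^ p) - ((|t - s1|) ^ p - (|t - s0|) ^ p)) / 2|
      ≤ ((s1 ^ p - s0 ^ p) + |(|t - s1|) ^ p - (|t - s0|) ^ p|) / 2 := by
    rw [abs_div, abs_of_nonneg (by norm_num : (0:ℝ) ≤ 2)]
    gcongr
    calc |(s1 ^ p - s0 ^ p) - ((|t - s1|) ^ p - (|t - s0|) ^ p)|
        ≤ |s1 ^ p - s0 ^ p| + |(|t - s1|) ^ p - (|t - s0|) ^ p| := abs_sub _ _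
      _ = (s1 ^ p - s0 ^ p) + |(|t - s1|) ^ p - (|t - s0|) ^ p| := by
          rw [abs_of_nonneg hA0]
  have hjp0 : 0 ≤ (j:ℝ) ^ (p - 1) := Real.rpow_nonneg hj0.le _
  have hMp0 : 0 ≤ M ^ (p - 1) := Real.rpow_nonneg hM0.le _
  calc |((s1 ^ p - s0 ^ p) - ((|t - s1|) ^ p - (|t - s0|) ^ p)) / 2|
      ≤ ((s1 ^ p - s0 ^ p) + |(|t - s1|) ^ p - (|t - s0|) ^ p|) / 2 := habs
    _ ≤ ((j:ℝ) ^ (p - 1) * (n:ℝ) ^ (-p) + 2 * M ^ (p - 1) * (n:ℝ) ^ (-p)) / 2 := by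
        gcongr <;> linarith
    _ ≤ 2 * (n:ℝ) ^ (-p) * ((j:ℝ) ^ (p - 1) + M ^ (p - 1)) := by
        nlinarith [mul_nonneg hjp0 hnnegpos.le, mul_nonneg hMp0 hnnegpos.le]
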